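/- Let X, Y : [0,1] → ℝ^d be continuously differentiable paths and let X ⊙ Y : [0,1]² → ℝ^d be the membrane (s,t) ↦ (X_1(s)Y_1(t), ..., X_d(s)Y_d(t)) given by componentwise multiplication. Then the signature matrix of X ⊙ Y is the Hadamard (entrywise) product of the path signature matrices: S(X ⊙ Y)_{ij} = S(X)_{ij} · S(Y)_{ij} for all i, j. -/

import Mathlib

open MeasureTheory

noncomputable section

/-- The ordered simplex `0 ≤ t 0 ≤ t 1 ≤ ⋯ ≤ t (k-1) ≤ 1` in `Fin k → ℝ`. -/
def orderedSimplex (k : ℕ) : Set (Fin k → ℝ) :=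
  {t | Monotone t ∧ ∀ a, t a ∈ Set.Icc (0 : ℝ) 1}

/-- Iterated-integral (path) signature entry for a family of scalar coordinate
functions `f a : ℝ → ℝ`, i.e. `⟨σ(X), e_{i₁}* ⊗ ⋯ ⊗ e_{i_k}*⟩` with `f a = X_{i_a}`. -/
def pathSig {k : ℕ} (f : Fin k → ℝ → ℝ) : ℝ :=
  ∫ t in orderedSimplex k, ∏ a, deriv (f a) (t a)

/-- Mixed second partial derivative `∂²/∂s∂t`. -/
def d12 (f : ℝ → ℝ → ℝ) (s t : ℝ) : ℝ :=
  deriv (fun t' => deriv (fun s' => f s' t') s) t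

/-- id-signature entry for a family of scalar membrane coordinate functions. -/
def memSig {k : ℕ} (f : Fin k → ℝ → ℝ → ℝ) : ℝ :=
  ∫ p in (orderedSimplex k) ×ˢ (orderedSimplex k), ∏ a, d12 (f a) (p.1 a) (p.2 a)

/-- the signature matrix of the Hadamard-product membrane
`X ⊙ Y : (s,t) ↦ (X₁(s)Y₁(t), …, X_d(s)Y_d(t))` is the entrywise product of the
path signature matrices. -/
theorem hadamard_membrane_signature_matrix (d : ℕ)
    (X Y : ℝ → Fin d → ℝ) (hX : ContDiff ℝ 1 X) (hY : ContDiff ℝ 1 Y)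
    (i j : Fin d) :
    memSig (fun a s t => X s (![i, j] a) * Y t (![i, j] a))
      = pathSig (fun a t => X t (![i, j] a)) * pathSig (fun a t => Y t (![i, j] a)) := by
  have hX' : Differentiable ℝ X := hX.differentiable one_ne_zero
  have hY' : Differentiable ℝ Y := hY.differentiable one_ne_zero
  have hXc : ∀ c : Fin d, Differentiable ℝ (fun s => X s c) := fun c x =>
    ((ContinuousLinearMap.proj (R := ℝ) (φ := fun _ : Fin d => ℝ) c).differentiable.comp hX') x
  have hYc : ∀ c : Fin d, Differentiable ℝ (fun s => Y s c) := fun c x =>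
    ((ContinuousLinearMap.proj (R := ℝ) (φ := fun _ : Fin d => ℝ) c).differentiable.comp hY') x
  have key : ∀ (c : Fin d) (s t : ℝ),
      d12 (fun s t => X s c * Y t c) s t
        = deriv (fun s => X s c) s * deriv (fun t => Y t c) t := by
    intro c s t
    unfold d12
    have h1 : ∀ t' : ℝ, deriv (fun s' => X s' c * Y t' c) s
        = deriv (fun s' => X s' c) s * Y t' c := fun t' => deriv_mul_const (hXc c s) _
    simp only [h1]
    exact deriv_const_mul _ (hYc c t)
  unfold memSig pathSig
  have hint : ∀ p : (Fin 2 → ℝ) × (Fin 2 → ℝ),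
      (∏ a, d12 (fun s t => X s (![i, j] a) * Y t (![i, j] a)) (p.1 a) (p.2 a))
        = (∏ a, deriv (fun s => X s (![i, j] a)) (p.1 a))
          * (∏ a, deriv (fun t => Y t (![i, j] a)) (p.2 a)) := by
    intro p
    rw [← Finset.prod_mul_distrib]
    exact Finset.prod_congr rfl fun a _ => key _ _ _
  rw [show (fun p : (Fin 2 → ℝ) × (Fin 2 → ℝ) =>
      ∏ a, d12 (fun s t => X s (![i, j] a) * Y t (![i, j] a)) (p.1 a) (p.2 a))
      = fun p => (∏ a, deriv (fun s => X s (![i, j] a)) (p.1 a))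
          * (∏ a, deriv (fun t => Y t (![i, j] a)) (p.2 a)) from funext hint]
  rw [MeasureTheory.Measure.volume_eq_prod]
  exact setIntegral_prod_mul (μ := volume) (ν := volume)
    (fun x : Fin 2 → ℝ => ∏ a, deriv (fun s => X s (![i, j] a)) (x a))
    (fun y : Fin 2 → ℝ => ∏ a, deriv (fun t => Y t (![i, j] a)) (y a)) _ _
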